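/- Let A be a unital simple C*-algebra and (a_λ) a bounded increasing net of positive elements of A converging strongly in A** to a scalar c·1. Then (a_λ) converges to c·1 in norm. -/

import Mathlib

open scoped ComplexOrder



lemma aux_im {A : Type*} [CStarAlgebra A] (φ : A →L[ℂ] ℂ) (hφ : ‖φ‖ ≤ 1) (h1 : φ 1 = 1)
    {x : A} (hx : IsSelfAdjoint x) : (φ x).im = 0 := by
  have key : ∀ n : ℝ, (φ x).re ^ 2 + ((φ x).im + n) ^ 2 ≤ ‖x‖ ^ 2 + n ^ 2 := by
    intro n
    have h1' : ‖x + ((n : ℂ) * Complex.I) • 1‖ ^ 2 ≤ ‖x‖ ^ 2 + n ^ 2 := by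
      have hsq : ‖x + ((n : ℂ) * Complex.I) • 1‖ ^ 2
          = ‖star (x + ((n : ℂ) * Complex.I) • 1) * (x + ((n : ℂ) * Complex.I) • 1)‖ := by
        rw [CStarRing.norm_star_mul_self]; ring
      have hstar : star (x + ((n : ℂ) * Complex.I) • 1) = x - ((n : ℂ) * Complex.I) • 1 := by
        simp [star_smul, hx.star_eq, sub_eq_add_neg]
      have hii : ((n : ℂ) * Complex.I) * ((n : ℂ) * Complex.I) = -((n : ℂ) ^ 2) := by
        rw [show ((n:ℂ)*Complex.I)*((n:ℂ)*Complex.I) = (n:ℂ)^2 * (Complex.I*Complex.I) by ring,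
          Complex.I_mul_I]; ring
      have hmul : (x - ((n : ℂ) * Complex.I) • 1) * (x + ((n : ℂ) * Complex.I) • 1)
          = x * x + ((n : ℂ) ^ 2) • 1 := by
        rw [sub_mul, mul_add, mul_add, smul_mul_assoc, mul_smul_comm, smul_mul_assoc]
        simp only [one_mul, mul_one]
        rw [smul_smul, hii, neg_smul]
        abel
      rw [hsq, hstar, hmul]
      calc ‖x * x + ((n : ℂ) ^ 2) • (1 : A)‖ ≤ ‖x * x‖ + ‖((n : ℂ) ^ 2) • (1 : A)‖ :=
            norm_add_le _ _
      _ ≤ ‖x‖ ^ 2 + n ^ 2 := by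
          gcongr
          · exact (norm_mul_le x x).trans_eq (sq ‖x‖).symm
          · rw [norm_smul]
            rcases subsingleton_or_nontrivial A with h | h
            · simp [Subsingleton.elim (1 : A) 0]
              positivity
            · simp [norm_one, ← Complex.ofReal_pow, Complex.norm_real,
                abs_of_nonneg (sq_nonneg n)]
    have h2' : ‖φ (x + ((n : ℂ) * Complex.I) • 1)‖ ^ 2 ≤ ‖x + ((n : ℂ) * Complex.I) • 1‖ ^ 2 := by
      have h := (φ.le_opNorm _).trans
        (mul_le_of_le_one_left (norm_nonneg (x + ((n : ℂ) * Complex.I) • 1)) hφ)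
      exact pow_le_pow_left₀ (norm_nonneg _) h 2
    have h3' : φ (x + ((n : ℂ) * Complex.I) • 1) = φ x + (n : ℂ) * Complex.I := by
      rw [map_add, map_smul, h1]; simp
    rw [h3'] at h2'
    have h4' : ‖φ x + (n : ℂ) * Complex.I‖ ^ 2 = (φ x).re ^ 2 + ((φ x).im + n) ^ 2 := by
      rw [Complex.sq_norm, Complex.normSq_apply]
      simp
      ring
    rw [h4'] at h2'
    exact h2'.trans h1'
  by_contra ht
  set t := (φ x).im with htdef
  set C := ‖x‖ ^ 2 - (φ x).re ^ 2 - t ^ 2 with hC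
  have key2 : ∀ n : ℝ, 2 * t * n ≤ C := by
    intro n
    have := key n
    nlinarith [this]
  have h := key2 ((C + 1) / (2 * t))
  rw [mul_div_cancel₀ _ (mul_ne_zero two_ne_zero ht)] at h
  linarith


set_option maxHeartbeats 800000 in
set_option synthInstance.maxHeartbeats 200000 in
lemma aux_state {A : Type*} [CStarAlgebra A] [Nontrivial A] (x : A) [IsStarNormal x] {z : ℂ}
    (hz : z ∈ spectrum ℂ x) :
    ∃ φ : A →L[ℂ] ℂ, ‖φ‖ ≤ 1 ∧ φ 1 = 1 ∧ φ x = z := by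
  set S := StarAlgebra.elemental ℂ x with hS
  have hxS : x ∈ S := StarAlgebra.elemental.self_mem ℂ x
  set x' : S := ⟨x, hxS⟩ with hx'
  haveI : Nontrivial S := ⟨0, 1, fun h => zero_ne_one (α := A) (by simpa using congrArg Subtype.val h)⟩
  have hz' : z ∈ spectrum ℂ x' := by
    rw [StarSubalgebra.spectrum_eq (hS := StarAlgebra.elemental.isClosed ℂ x)]
    exact hz
  obtain ⟨f, hf⟩ := WeakDual.CharacterSpace.mem_spectrum_iff_exists.mp hz'
  -- f as a continuous linear map on S
  let g₀ : S →L[ℂ] ℂ := (f : WeakDual ℂ S)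
  have hg₀ : ∀ y : S, g₀ y = f y := fun _ => rfl
  have hg₀norm : ‖g₀‖ ≤ 1 := by
    refine ContinuousLinearMap.opNorm_le_bound _ zero_le_one fun y => ?_
    have : g₀ y ∈ spectrum ℂ y :=
      AlgHom.apply_mem_spectrum (WeakDual.CharacterSpace.toAlgHom f) y
    simpa using spectrum.norm_le_norm_of_mem this
  -- extend by Hahn-Banach
  let p : Subspace ℂ A := Subalgebra.toSubmodule S.toSubalgebra
  let g₁ : p →L[ℂ] ℂ := g₀
  obtain ⟨φ, hφext, hφnorm⟩ := exists_extension_norm_eq p g₁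
  have h1p : (1 : A) ∈ p := Subalgebra.mem_toSubmodule _ |>.mpr (one_mem _)
  refine ⟨φ, ?_, ?_, ?_⟩
  · rw [hφnorm]; exact hg₀norm
  · calc φ 1 = g₁ ⟨1, h1p⟩ := hφext ⟨1, h1p⟩
    _ = f 1 := rfl
    _ = 1 := map_one f
  · calc φ x = g₁ ⟨x, hxS⟩ := hφext ⟨x, hxS⟩
    _ = f x' := rfl
    _ = z := hf

lemma aux_nonneg {A : Type*} [CStarAlgebra A] [PartialOrder A] [StarOrderedRing A]
    (φ : A →L[ℂ] ℂ) (hφ : ‖φ‖ ≤ 1) (h1 : φ 1 = 1) {x : A} (hx : 0 ≤ x) : 0 ≤ φ x := by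
  have hsa : IsSelfAdjoint x := .of_nonneg hx
  have him : (φ x).im = 0 := aux_im φ hφ h1 hsa
  set r : ℝ := ‖x‖ with hr
  have hub : x ≤ algebraMap ℝ A r := hsa.le_algebraMap_norm_self
  have hnn : (0 : A) ≤ algebraMap ℝ A r - x := sub_nonneg.mpr hub
  have hle : algebraMap ℝ A r - x ≤ algebraMap ℝ A r := by
    simpa using sub_le_self (algebraMap ℝ A r) hx
  have hnorm : ‖algebraMap ℝ A r - x‖ ≤ r :=
    (CStarAlgebra.norm_le_iff_le_algebraMap _ (norm_nonneg x) hnn).mpr hle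
  have hφval : φ (algebraMap ℝ A r - x) = (r : ℂ) - φ x := by
    rw [map_sub, Algebra.algebraMap_eq_smul_one, φ.map_smul_of_tower, h1]
    simp [Complex.real_smul]
  have habs : ‖(r : ℂ) - φ x‖ ≤ r := by
    rw [← hφval]
    exact (φ.le_opNorm _).trans <| by
      calc ‖φ‖ * ‖algebraMap ℝ A r - x‖ ≤ 1 * r := by
            exact mul_le_mul hφ hnorm (norm_nonneg _) zero_le_one
      _ = r := one_mul r
  have hres : |r - (φ x).re| ≤ r := by
    have : ((r : ℂ) - φ x) = ((r - (φ x).re : ℝ) : ℂ) := by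
      apply Complex.ext <;> simp [him]
    rw [this, Complex.norm_real, Real.norm_eq_abs] at habs
    exact habs
  rw [Complex.le_def]
  constructor
  · have := abs_le.mp hres
    simp only [Complex.zero_re]
    linarith [this.2]
  · simp [him]

set_option maxHeartbeats 2000000 in
/-- Let `A` be a unital simple C*-algebra and `(a i)` a bounded
increasing net of positive elements of `A` converging strongly in `A**` to the
scalar `c • 1` (for bounded increasing nets this is equivalent to convergence
`φ (a i) → c • φ 1` for every positive functional `φ` on `A`).  Then `(a i)`
converges to `c • 1` in norm. -/
theorem stmt_1 {A : Type*} [NormedRing A] [StarRing A] [CStarRing A] [NormedAlgebra ℂ A]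
    [StarModule ℂ A] [CompleteSpace A] [PartialOrder A] [StarOrderedRing A]
    (hsimple : ∀ I : TwoSidedIdeal A, IsClosed (I : Set A) → I = ⊥ ∨ I = ⊤)
    {ι : Type*} [Preorder ι] [IsDirected ι (· ≤ ·)] [Nonempty ι]
    (a : ι → A) (hpos : ∀ i, 0 ≤ a i) (hmono : Monotone a)
    (hbdd : ∃ C : ℝ, ∀ i, ‖a i‖ ≤ C) (c : ℝ)
    (hconv : ∀ φ : A →L[ℂ] ℂ, (∀ x : A, 0 ≤ x → 0 ≤ φ x) →
      Filter.Tendsto (fun i => φ (a i)) Filter.atTop (nhds ((c : ℂ) * φ 1))) :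
    Filter.Tendsto a Filter.atTop (nhds ((c : ℂ) • (1 : A))) := by
  letI : CStarAlgebra A := {}
  rcases subsingleton_or_nontrivial A with hA | hA
  · have : a = fun _ => (c : ℂ) • (1 : A) := funext fun i => Subsingleton.elim _ _
    rw [this]; exact tendsto_const_nhds
  set b : ι → A := fun i => (c : ℂ) • (1 : A) - a i with hb
  have hone : IsSelfAdjoint ((c : ℂ) • (1 : A)) := by
    simp [IsSelfAdjoint, star_smul, Complex.star_def, Complex.conj_ofReal]
  have hbsa : ∀ i, IsSelfAdjoint (b i) := fun i => hone.sub (IsSelfAdjoint.of_nonneg (hpos i))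
  -- states attaining spectrum values
  have hstate : ∀ x : A, IsSelfAdjoint x → ∀ t : ℝ, (t : ℂ) ∈ spectrum ℂ x →
      ∃ φ : A →L[ℂ] ℂ, ‖φ‖ ≤ 1 ∧ φ 1 = 1 ∧ (∀ y : A, 0 ≤ y → 0 ≤ φ y) ∧ φ x = (t : ℂ) := by
    intro x hx t ht
    haveI := hx.isStarNormal
    obtain ⟨φ, h1, h2, h3⟩ := aux_state x ht
    exact ⟨φ, h1, h2, fun y hy => aux_nonneg φ h1 h2 hy, h3⟩
  -- monotone limit facts for a positive functional
  have hkey : ∀ φ : A →L[ℂ] ℂ, φ 1 = 1 → (∀ y : A, 0 ≤ y → 0 ≤ φ y) →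
      ∀ i, (φ (a i)).re ≤ c := by
    intro φ h1 hp i
    have hmono' : Monotone fun j => (φ (a j)).re := by
      intro j k hjk
      have h0 : 0 ≤ φ (a k) - φ (a j) := by
        rw [← map_sub]; exact hp _ (sub_nonneg.mpr (hmono hjk))
      have := (Complex.le_def.mp h0).1
      simpa using this
    have hlim : Filter.Tendsto (fun j => (φ (a j)).re) Filter.atTop (nhds c) := by
      have h := (Complex.continuous_re.tendsto _).comp (hconv φ hp)
      simpa [h1, Function.comp_def] using h
    by_contra hlt
    push_neg at hlt
    have hev : ∀ᶠ j in Filter.atTop, (φ (a j)).re < (φ (a i)).re :=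
      hlim.eventually_lt_const hlt
    obtain ⟨j, hj1, hj2⟩ := (hev.and (Filter.eventually_ge_atTop i)).exists
    exact absurd (hmono' hj2) (not_le.mpr hj1)
  -- positivity of b i
  have hbpos : ∀ i, 0 ≤ b i := by
    intro i
    rw [StarOrderedRing.nonneg_iff_spectrum_nonneg (R := ℝ) _ (hbsa i)]
    intro t ht
    have htC : (t : ℂ) ∈ spectrum ℂ (b i) := spectrum.algebraMap_mem ℂ ht
    obtain ⟨φ, hn, h1, hp, hval⟩ := hstate _ (hbsa i) t htC
    have hre : (φ (b i)).re = t := by rw [hval]; simp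
    have heq : (φ (b i)).re = c - (φ (a i)).re := by
      simp [hb, map_sub, map_smul, h1]
    have hle := hkey φ h1 hp i
    linarith
  -- reduce to norm convergence of b to 0
  rw [tendsto_iff_norm_sub_tendsto_zero]
  have hnorm_eq : ∀ i, ‖a i - (c : ℂ) • (1 : A)‖ = ‖b i‖ := fun i => norm_sub_rev _ _
  have hanti : ∀ {i j}, i ≤ j → ‖b j‖ ≤ ‖b i‖ := by
    intro i j hij
    exact CStarAlgebra.norm_le_norm_of_nonneg_of_le (hbpos j)
      (sub_le_sub_left (hmono hij) _)
  rw [Metric.tendsto_nhds]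
  intro ε hε
  by_contra hcon
  -- all norms are at least ε
  have hlow : ∀ i, ε ≤ ‖b i‖ := by
    intro i
    by_contra hlt
    push_neg at hlt
    apply hcon
    rw [Filter.eventually_atTop]
    refine ⟨i, fun j hj => ?_⟩
    rw [Real.dist_eq, sub_zero, abs_of_nonneg (norm_nonneg _), hnorm_eq]
    exact lt_of_le_of_lt (hanti hj) hlt
  -- choose states attaining the norms
  have hchoice : ∀ i, ∃ φ : A →L[ℂ] ℂ,
      ‖φ‖ ≤ 1 ∧ φ 1 = 1 ∧ (∀ y : A, 0 ≤ y → 0 ≤ φ y) ∧ φ (b i) = ((‖b i‖ : ℝ) : ℂ) :=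
    fun i => hstate _ (hbsa i) ‖b i‖
      (spectrum.algebraMap_mem ℂ (CStarAlgebra.norm_mem_spectrum_of_nonneg (hbpos i)))
  choose φf hφn hφ1 hφp hφval using hchoice
  set Φ : ι → WeakDual ℂ A := fun i => φf i with hΦ
  -- the set of positive functionals in the unit ball is weak-* compact
  have hcz : IsClosed {z : ℂ | 0 ≤ z} := by
    have : {z : ℂ | 0 ≤ z} = Complex.re ⁻¹' Set.Ici 0 ∩ Complex.im ⁻¹' {0} := by
      ext z
      simp [Complex.le_def, eq_comm]
    rw [this]
    exact (isClosed_Ici.preimage Complex.continuous_re).inter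
      (isClosed_singleton.preimage Complex.continuous_im)
  have hposcl : IsClosed {ψ : WeakDual ℂ A | ∀ y : A, 0 ≤ y → 0 ≤ ψ y} := by
    have : {ψ : WeakDual ℂ A | ∀ y : A, 0 ≤ y → 0 ≤ ψ y} =
        ⋂ y : {y : A // 0 ≤ y}, (fun ψ : WeakDual ℂ A => ψ y.1) ⁻¹' {z : ℂ | 0 ≤ z} := by
      ext ψ
      simp [Set.mem_iInter, Subtype.forall]
    rw [this]
    exact isClosed_iInter fun y => hcz.preimage (WeakDual.eval_continuous y.1)
  set K : Set (WeakDual ℂ A) :=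
    (WeakDual.toStrongDual ⁻¹' Metric.closedBall 0 1) ∩ {ψ | ∀ y : A, 0 ≤ y → 0 ≤ ψ y} with hK
  have hKc : IsCompact K := (WeakDual.isCompact_closedBall (𝕜 := ℂ) (E := A) 0 1).inter_right hposcl
  have hmem : ∀ i, Φ i ∈ K := fun i =>
    ⟨mem_closedBall_zero_iff.mpr (hφn i), hφp i⟩
  have hneK : K ∈ Filter.map Φ Filter.atTop := Filter.mem_map.mpr (Filter.univ_mem' hmem)
  obtain ⟨ψ, hψK, hψcl⟩ := hKc.exists_clusterPt (Filter.le_principal_iff.mpr hneK)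
  set ψ' : A →L[ℂ] ℂ := WeakDual.toStrongDual ψ with hψ'
  have hψpos : ∀ y : A, 0 ≤ y → 0 ≤ ψ' y := hψK.2
  have hψb : Filter.Tendsto (fun i => ψ' (b i)) Filter.atTop (nhds 0) := by
    have h1 := hconv ψ' hψpos
    have h2 : Filter.Tendsto (fun i => (c : ℂ) * ψ' 1 - ψ' (a i)) Filter.atTop
        (nhds ((c : ℂ) * ψ' 1 - (c : ℂ) * ψ' 1)) := Filter.Tendsto.const_sub _ h1
    simpa [hb, map_sub, map_smul, smul_eq_mul] using h2
  -- the cluster point has (ψ (b i)).re ≥ ε for every i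
  have hlower : ∀ i, ε ≤ (ψ' (b i)).re := by
    intro i
    have hclz : MapClusterPt ((fun ρ : WeakDual ℂ A => ρ (b i)) ψ) Filter.atTop
        ((fun ρ : WeakDual ℂ A => ρ (b i)) ∘ Φ) :=
      MapClusterPt.continuousAt_comp ((WeakDual.eval_continuous (b i)).continuousAt) hψcl
    have hset : {z : ℂ | ε ≤ z.re} ∈
        Filter.map ((fun ρ : WeakDual ℂ A => ρ (b i)) ∘ Φ) Filter.atTop := by
      rw [Filter.mem_map]
      rw [Filter.mem_atTop_sets]
      refine ⟨i, fun j hj => ?_⟩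
      have h0 : (0 : ℂ) ≤ φf j (b i) - φf j (b j) := by
        rw [← map_sub]
        refine hφp j _ ?_
        have hbb : b i - b j = a j - a i := by
          simp only [hb]
          abel
        rw [hbb]
        exact sub_nonneg.mpr (hmono hj)
      have h1 := (Complex.le_def.mp h0).1
      have h2 : (φf j (b j)).re = ‖b j‖ := by rw [hφval j]; simp
      simp only [Complex.zero_re, Complex.sub_re] at h1
      have h3 := hlow j
      simp only [Set.mem_preimage, Set.mem_setOf_eq, Function.comp_apply]
      change ε ≤ (φf j (b i)).re
      linarith
    have hclosed : IsClosed {z : ℂ | ε ≤ z.re} :=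
      isClosed_le continuous_const Complex.continuous_re
    have hmemcl : (fun ρ : WeakDual ℂ A => ρ (b i)) ψ ∈ closure {z : ℂ | ε ≤ z.re} :=
      mem_closure_iff_clusterPt.mpr
        (hclz.clusterPt.mono (Filter.le_principal_iff.mpr hset))
    rw [hclosed.closure_eq] at hmemcl
    exact hmemcl
  -- contradiction with ψ (b i) → 0
  obtain ⟨i, hi⟩ := (NormedAddCommGroup.tendsto_nhds_zero.mp hψb ε hε).exists
  have : (ψ' (b i)).re ≤ ‖ψ' (b i)‖ := by
    calc (ψ' (b i)).re ≤ |(ψ' (b i)).re| := le_abs_self _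
    _ ≤ ‖ψ' (b i)‖ := Complex.abs_re_le_norm _
    _ = ‖ψ' (b i)‖ := rfl
  linarith [hlower i]
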